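/- Let I be a σ-ideal on a set X, let J ⊆ I be a point-finite family with |J| ≤ 𝔠, and let ξ : J → 𝔅 be an injection into a subset 𝔅 ⊆ 2^ω of cardinality 𝔠 containing no uncountable compact subsets; define J_s = ξ⁻¹[2^ω_s] for s ∈ 2^{<ω}. Then for any set S ⊆ X with S ∩ ⋃J ∉ I, the set T = {t ∈ 2^{<ω} : S ∩ ⋃J_t ∉ I} is a perfect subtree of 2^{<ω}: it is nonempty and every element of T has two incomparable extensions in T. -/

import Mathlib

/-- The set of branches of the Cantor space 2^ω extending a finite binary sequence s. -/
def bcylinder (s : List Bool) : Set (ℕ → Bool) :=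
  {x | ∀ i : Fin s.length, x i = s.get i}

/-- the length-`n` restriction of a branch, as a list -/
def brestrict (y : ℕ → Bool) (n : ℕ) : List Bool := List.ofFn fun i : Fin n => y i

@[simp] lemma brestrict_length (y : ℕ → Bool) (n : ℕ) : (brestrict y n).length = n := by
  simp [brestrict]

lemma mem_brestrict (y : ℕ → Bool) (n : ℕ) : y ∈ bcylinder (brestrict y n) := by
  intro i
  show y i = (brestrict y n).get i
  rw [List.get_eq_getElem]
  simp [brestrict, List.get_ofFn]

lemma eq_brestrict {y : ℕ → Bool} {s : List Bool} (h : y ∈ bcylinder s) :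
    s = brestrict y s.length := by
  apply List.ext_get (by simp)
  intro i h1 h2
  have := h ⟨i, h1⟩
  simp [brestrict, List.get_ofFn]
  exact this.symm

lemma brestrict_prefix (y : ℕ → Bool) {m n : ℕ} (h : m ≤ n) :
    brestrict y m <+: brestrict y n := by
  rw [List.prefix_iff_eq_take]
  apply List.ext_get (by simp [h])
  intro i h1 h2
  simp [brestrict, List.get_ofFn, List.getElem_take']

lemma brestrict_getD (y : ℕ → Bool) {n i : ℕ} (h : i < n) :
    (brestrict y n).getD i false = y i := by
  rw [List.getD_eq_getElem _ _ (by simp [h])]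
  simp [brestrict]

lemma bcylinder_mono {s t : List Bool} (h : s <+: t) : bcylinder t ⊆ bcylinder s := by
  intro y hy i
  have hlt : (i : ℕ) < t.length := lt_of_lt_of_le i.isLt h.length_le
  have := hy ⟨i, hlt⟩
  rw [this]
  show t.get ⟨i, hlt⟩ = s.get i
  have := h.getElem i.isLt
  simpa [List.get_eq_getElem] using this.symm

lemma prefix_brestrict {y : ℕ → Bool} {s : List Bool} (h : y ∈ bcylinder s) {n : ℕ}
    (hn : s.length ≤ n) : s <+: brestrict y n := by
  rw [eq_brestrict h]
  exact brestrict_prefix y hn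

/-- given a point-finite family 𝒥 ⊆ I and an injection ξ of 𝒥 into a
set 𝔅 ⊆ 2^ω of cardinality 𝔠 without uncountable compact subsets, setting
J_s = ξ⁻¹[2^ω_s], for any S with S ∩ ⋃𝒥 ∉ I the set
T = {t : S ∩ ⋃J_t ∉ I} is a perfect subtree of 2^{<ω}. -/
theorem perfect_tree_of_positive_union {X : Type*} (I : Set (Set X))
    (hne : I.Nonempty)
    (hdown : ∀ A B : Set X, A ∈ I → B ⊆ A → B ∈ I)
    (hcu : ∀ f : ℕ → Set X, (∀ n, f n ∈ I) → (⋃ n, f n) ∈ I)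
    (𝒥 : Set (Set X)) (h𝒥I : 𝒥 ⊆ I)
    (hpf : ∀ x : X, {J ∈ 𝒥 | x ∈ J}.Finite)
    (𝔅 : Set (ℕ → Bool)) (h𝔅card : Cardinal.mk 𝔅 = Cardinal.continuum)
    (h𝔅cpt : ∀ K ⊆ 𝔅, IsCompact K → K.Countable)
    (ξ : Set X → (ℕ → Bool)) (hξinj : Set.InjOn ξ 𝒥) (hξ𝔅 : ξ '' 𝒥 ⊆ 𝔅)
    (S : Set X) (hS : S ∩ ⋃₀ 𝒥 ∉ I) :
    letI T : Set (List Bool) := {t | S ∩ ⋃₀ {J ∈ 𝒥 | ξ J ∈ bcylinder t} ∉ I}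
    ([] ∈ T) ∧ (∀ t ∈ T, ∀ s : List Bool, s <+: t → s ∈ T) ∧
      (∀ t ∈ T, ∃ t₁ ∈ T, ∃ t₂ ∈ T, t <+: t₁ ∧ t <+: t₂ ∧
        ¬ t₁ <+: t₂ ∧ ¬ t₂ <+: t₁) := by
  classical
  set T : Set (List Bool) := {t | S ∩ ⋃₀ {J | J ∈ 𝒥 ∧ ξ J ∈ bcylinder t} ∉ I} with hTdef
  -- abbreviations
  set U : List Bool → Set X := fun s => S ∩ ⋃₀ {J ∈ 𝒥 | ξ J ∈ bcylinder s} with hU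
  have hTmem : ∀ s : List Bool, s ∈ T ↔ U s ∉ I := fun s => Iff.rfl
  -- empty set in I
  have hempty : ∅ ∈ I := by
    obtain ⟨A, hA⟩ := hne
    exact hdown A ∅ hA (Set.empty_subset A)
  -- binary unions
  have hI2 : ∀ A B : Set X, A ∈ I → B ∈ I → A ∪ B ∈ I := by
    intro A B hA hB
    have : (⋃ n : ℕ, if n = 0 then A else B) = A ∪ B := by
      ext p
      simp only [Set.mem_iUnion, Set.mem_union]
      constructor
      · rintro ⟨n, hn⟩
        by_cases h : n = 0
        · left; simpa [h] using hn
        · right; simpa [h] using hn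
      · rintro (hp | hp)
        · exact ⟨0, by simpa using hp⟩
        · exact ⟨1, by simpa using hp⟩
    rw [← this]
    exact hcu _ fun n => by by_cases h : n = 0 <;> simp [h, hA, hB]
  -- monotonicity of U
  have hUmono : ∀ {s t : List Bool}, s <+: t → U t ⊆ U s := by
    intro s t h
    apply Set.inter_subset_inter_right
    apply Set.sUnion_subset_sUnion
    intro J hJ
    exact ⟨hJ.1, bcylinder_mono h hJ.2⟩
  -- downward closedness
  have hdc : ∀ t ∈ T, ∀ s : List Bool, s <+: t → s ∈ T := by
    intro t ht s hst hs
    exact ht (hdown _ _ hs (hUmono hst))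
  -- root
  have hroot : [] ∈ T := by
    have : {J ∈ 𝒥 | ξ J ∈ bcylinder []} = 𝒥 := by
      ext J
      simp only [Set.mem_setOf_eq, and_iff_left_iff_imp]
      intro _ i
      exact absurd i.isLt (by simp [bcylinder])
    show U [] ∉ I
    rw [hU]
    simp only [this]
    exact hS
  refine ⟨hroot, hdc, ?_⟩
  -- splitting
  intro t ht
  by_contra hcon
  push_neg at hcon
  -- hcon : chain condition above t
  have hchain : ∀ t₁ ∈ T, ∀ t₂ ∈ T, t <+: t₁ → t <+: t₂ → t₁ <+: t₂ ∨ t₂ <+: t₁ := by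
    intro t₁ ht₁ t₂ ht₂ h1 h2
    by_contra h
    push_neg at h
    exact h.2 (hcon t₁ ht₁ t₂ ht₂ h1 h2 h.1)
  -- every element of T has a one-step extension in T
  have hstep : ∀ s ∈ T, ∃ b : Bool, s ++ [b] ∈ T := by
    intro s hs
    by_contra h
    push_neg at h
    have h0 : U (s ++ [false]) ∈ I := not_not.mp (h false)
    have h1 : U (s ++ [true]) ∈ I := not_not.mp (h true)
    apply hs
    apply hdown _ _ (hI2 _ _ h0 h1)
    intro p hp
    obtain ⟨hpS, J, ⟨hJ𝒥, hJc⟩, hpJ⟩ := hp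
    have hkey : ξ J ∈ bcylinder (s ++ [ξ J s.length]) := by
      intro i
      rcases lt_or_ge (i : ℕ) s.length with hi | hi
      · have := hJc ⟨i, hi⟩
        rw [this]
        show s.get ⟨i, hi⟩ = _
        simp [List.get_eq_getElem, List.getElem_append_left hi]
      · have hlen : (i : ℕ) = s.length := by
          have := i.isLt
          simp at this
          omega
        show ξ J i = (s ++ [ξ J s.length]).get i
        simp only [List.get_eq_getElem]
        rw [List.getElem_append_right (by omega)]
        simp [hlen]
    cases hb : ξ J s.length with
    | false => exact Or.inl ⟨hpS, J, ⟨hJ𝒥, by rwa [hb] at hkey⟩, hpJ⟩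
    | true => exact Or.inr ⟨hpS, J, ⟨hJ𝒥, by rwa [hb] at hkey⟩, hpJ⟩
  -- extensions of every length
  have hlevel : ∀ n : ℕ, ∃ s : List Bool, t <+: s ∧ s.length = t.length + n ∧ s ∈ T := by
    intro n
    induction n with
    | zero => exact ⟨t, List.prefix_refl t, rfl, ht⟩
    | succ n ih =>
      obtain ⟨s, hpre, hlen, hsT⟩ := ih
      obtain ⟨b, hb⟩ := hstep s hsT
      exact ⟨s ++ [b], hpre.trans (List.prefix_append s [b]), by simp [hlen]; omega, hb⟩
  choose sfun hspre hslen hsT using hlevel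
  -- the small "garbage" set
  set g : List Bool → Set X := fun s => if U s ∈ I then U s else ∅ with hg
  set G : Set X := ⋃ s : List Bool, g s with hG
  have hGI : G ∈ I := by
    obtain ⟨f, hsurj⟩ := exists_surjective_nat (List Bool)
    rw [hG, ← hsurj.iUnion_comp g]
    exact hcu _ fun n => by
      by_cases h : U (f n) ∈ I <;> simp [hg, h, hempty]
  -- key: outside G, restrictions of ξ J follow sfun
  have hkeyres : ∀ p ∈ S, p ∉ G → ∀ J, J ∈ 𝒥 → ξ J ∈ bcylinder t → p ∈ J →
      ∀ n : ℕ, brestrict (ξ J) (t.length + n) = sfun n := by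
    intro p hpS hpG J hJ𝒥 hJt hpJ n
    set s' := brestrict (ξ J) (t.length + n) with hs'
    have hpU : p ∈ U s' := ⟨hpS, J, ⟨hJ𝒥, mem_brestrict _ _⟩, hpJ⟩
    have hs'T : s' ∈ T := by
      intro hIs'
      exact hpG (Set.mem_iUnion.mpr ⟨s', by simp [hg, hIs']; exact ⟨hIs', hpU⟩⟩)
    have hts' : t <+: s' := prefix_brestrict hJt (Nat.le_add_right _ _)
    have hcmp := hchain s' hs'T (sfun n) (hsT n) hts' (hspre n)
    have hlen : s'.length = (sfun n).length := by simp [hs', hslen n]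
    rcases hcmp with h | h
    · exact h.eq_of_length hlen
    · exact (h.eq_of_length hlen.symm).symm
  -- conclude U t ∈ I, contradiction
  apply ht
  by_cases hN : (U t \ G).Nonempty
  · obtain ⟨p₀, hp₀U, hp₀G⟩ := hN
    obtain ⟨hp₀S, J₀, ⟨hJ₀𝒥, hJ₀t⟩, hp₀J₀⟩ := hp₀U
    have hsub : U t ⊆ G ∪ J₀ := by
      intro p hp
      by_cases hpG : p ∈ G
      · exact Or.inl hpG
      · obtain ⟨hpS, J, ⟨hJ𝒥, hJt⟩, hpJ⟩ := hp
        have hξeq : ξ J = ξ J₀ := by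
          funext i
          have h1 := hkeyres p hpS hpG J hJ𝒥 hJt hpJ (i + 1)
          have h2 := hkeyres p₀ hp₀S hp₀G J₀ hJ₀𝒥 hJ₀t hp₀J₀ (i + 1)
          have hi : i < t.length + (i + 1) := by omega
          rw [← brestrict_getD (ξ J) hi, ← brestrict_getD (ξ J₀) hi, h1, h2]
        have : J = J₀ := hξinj hJ𝒥 hJ₀𝒥 hξeq
        exact Or.inr (this ▸ hpJ)
    exact hdown _ _ (hI2 _ _ hGI (h𝒥I hJ₀𝒥)) hsub
  · rw [Set.not_nonempty_iff_eq_empty, Set.diff_eq_empty] at hN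
    exact hdown _ _ hGI hN
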